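/- There is a constant C such that for all sufficiently large x, the number of composite integers n ≤ x satisfying rad(φ(n)) ∣ n − 1 whose largest prime factor exceeds L(x)² is at most C · x / L(x), where L(x) = exp(log x · (log log log x)/(log log x)). -/

import Mathlib

open Finset
open scoped Classical

/-- The radical of a natural number: the product of its distinct prime divisors. -/
def rad (n : ℕ) : ℕ := ∏ p ∈ n.primeFactors, p

/-- `L x = exp(log x · (log log log x)/(log log x))`. -/
noncomputable def L (x : ℝ) : ℝ :=
  Real.exp (Real.log x * (Real.log (Real.log (Real.log x)) / Real.log (Real.log x)))

lemma one_le_rad (n : ℕ) : 1 ≤ rad n :=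
  Finset.prod_pos (fun p hp => (Nat.prime_of_mem_primeFactors hp).pos)

lemma rad_dvd_rad {a b : ℕ} (h : a ∣ b) (hb : b ≠ 0) : rad a ∣ rad b :=
  Finset.prod_dvd_prod_of_subset _ _ _ (Nat.primeFactors_mono h hb)

lemma rad_prime_pow {p k : ℕ} (hp : p.Prime) (hk : k ≠ 0) : rad (p ^ k) = p := by
  unfold rad
  rw [Nat.primeFactors_pow _ hk, Nat.Prime.primeFactors hp, Finset.prod_singleton]

lemma rad_mul_coprime {a b : ℕ} (ha : a ≠ 0) (hb : b ≠ 0) (h : Nat.Coprime a b) :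
    rad (a * b) = rad a * rad b := by
  unfold rad
  rw [Nat.primeFactors_mul ha hb, Finset.prod_union (Nat.Coprime.disjoint_primeFactors h)]

noncomputable def frk (σ : ℝ) (m : ℕ) : ℝ :=
  if m = 0 then 0 else ((m : ℝ) ^ (-σ)) / rad m

lemma frk_nonneg (σ : ℝ) (m : ℕ) : 0 ≤ frk σ m := by
  unfold frk
  split
  · exact le_refl 0
  · positivity

lemma frk_one (σ : ℝ) : frk σ 1 = 1 := by
  simp [frk, rad]

lemma frk_mul (σ : ℝ) {m n : ℕ} (h : Nat.Coprime m n) :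
    frk σ (m * n) = frk σ m * frk σ n := by
  rcases eq_or_ne m 0 with rfl | hm
  · simp at h; simp [h, frk]
  rcases eq_or_ne n 0 with rfl | hn
  · simp at h; simp [h, frk]
  unfold frk
  rw [if_neg hm, if_neg hn, if_neg (Nat.mul_ne_zero hm hn)]
  rw [Nat.cast_mul, Real.mul_rpow (by positivity) (by positivity),
    rad_mul_coprime hm hn h, Nat.cast_mul]
  ring

lemma frk_pow_le (σ : ℝ) (hσ : 0 < σ) {p : ℕ} (hp : p.Prime) (k : ℕ) :
    frk σ (p ^ (k + 1)) ≤ ((p:ℝ) ^ (-σ)) ^ (k+1) / p := by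
  unfold frk
  rw [if_neg (pow_ne_zero _ hp.pos.ne')]
  rw [rad_prime_pow hp (Nat.succ_ne_zero k), Nat.cast_pow,
    ← Real.rpow_natCast ((p:ℝ)) (k+1), ← Real.rpow_mul (by positivity),
    ]
  have h2 : ((p:ℝ) ^ (-σ)) ^ (k+1) = (p:ℝ) ^ ((((k+1) : ℕ):ℝ) * -σ) := by
    rw [← Real.rpow_natCast ((p:ℝ) ^ (-σ)) (k+1), ← Real.rpow_mul (by positivity), mul_comm]
  rw [h2]


lemma geom_lt_one {σ : ℝ} (hσ : 0 < σ) {p : ℕ} (hp : p.Prime) : (p:ℝ) ^ (-σ) < 1 :=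
  Real.rpow_lt_one_of_one_lt_of_neg (by exact_mod_cast hp.one_lt) (neg_neg_of_pos hσ)

set_option maxHeartbeats 1000000 in
lemma summable_frk_pow {σ : ℝ} (hσ : 0 < σ) {p : ℕ} (hp : p.Prime) :
    Summable (fun k => frk σ (p ^ k)) := by
  have hgeo : Summable (fun k : ℕ => ((p:ℝ) ^ (-σ)) ^ k) :=
    summable_geometric_of_lt_one (Real.rpow_nonneg (Nat.cast_nonneg p) _) (geom_lt_one hσ hp)
  refine Summable.of_nonneg_of_le (fun k => frk_nonneg σ _) (fun k => ?_) hgeo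
  cases k with
  | zero => simp [frk_one]
  | succ k =>
      refine (frk_pow_le σ hσ hp k).trans ?_
      have h1 : (1:ℝ) ≤ (p:ℝ) := by exact_mod_cast hp.one_le
      have h0 : (0:ℝ) < ((p:ℝ) ^ (-σ)) ^ (k+1) := by positivity
      rw [div_le_iff₀ (by linarith : (0:ℝ) < (p:ℝ))]
      nlinarith

set_option maxHeartbeats 1000000 in
lemma tsum_frk_le {σ : ℝ} (hσ : 0 < σ) {p : ℕ} (hp : p.Prime) :
    ∑' k, frk σ (p ^ k) ≤ 1 + 1 / (σ * p * Real.log p) := by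
  have hp0 : (0:ℝ) < (p:ℝ) := by exact_mod_cast hp.pos
  have hp1 : (1:ℝ) < (p:ℝ) := by exact_mod_cast hp.one_lt
  set r : ℝ := (p:ℝ) ^ (-σ) with hr
  have hr0 : 0 < r := Real.rpow_pos_of_pos hp0 _
  have hr1 : r < 1 := geom_lt_one hσ hp
  have hlogp : 0 < Real.log p := Real.log_pos hp1
  have hsum := summable_frk_pow hσ hp
  rw [hsum.tsum_eq_zero_add]
  simp only [pow_zero, frk_one]
  have hgeo0 : Summable (fun k : ℕ => r ^ k) := summable_geometric_of_lt_one hr0.le hr1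
  have hgeo : Summable (fun k : ℕ => r ^ (k+1) / p) := by
    apply Summable.div_const
    exact (hgeo0.mul_right r).congr (fun k => (pow_succ r k).symm)
  have hsum1 : Summable (fun k : ℕ => frk σ (p ^ (k+1))) :=
    Summable.of_nonneg_of_le (fun k => frk_nonneg σ _) (fun k => frk_pow_le σ hσ hp k) hgeo
  have h1 : ∑' k : ℕ, frk σ (p ^ (k+1)) ≤ ∑' k : ℕ, r ^ (k+1) / p :=
    Summable.tsum_le_tsum (fun k => frk_pow_le σ hσ hp k) hsum1 hgeo
  have h2 : ∑' k : ℕ, r ^ (k+1) / p = (1 - r)⁻¹ * r / p := by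
    rw [tsum_div_const]
    congr 1
    calc ∑' k : ℕ, r ^ (k+1) = ∑' k : ℕ, r ^ k * r := tsum_congr fun k => (pow_succ r k)
      _ = (1 - r)⁻¹ * r := by rw [tsum_mul_right, tsum_geometric_of_lt_one hr0.le hr1]
  have hps : 1 + σ * Real.log p ≤ (p:ℝ) ^ σ := by
    rw [Real.rpow_def_of_pos hp0, mul_comm (Real.log p) σ]
    linarith [Real.add_one_le_exp (σ * Real.log p)]
  have hps0 : (0:ℝ) < (p:ℝ) ^ σ - 1 := by nlinarith
  have hrinv : r = ((p:ℝ) ^ σ)⁻¹ := Real.rpow_neg hp0.le σ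
  have key : (1 - r)⁻¹ * r = ((p:ℝ) ^ σ - 1)⁻¹ := by
    have h1r : (1:ℝ) - r ≠ 0 := by linarith
    have hrne : r ≠ 0 := hr0.ne'
    have hPe : (p:ℝ) ^ σ = r⁻¹ := by rw [hrinv, inv_inv]
    rw [hPe]
    rw [show r⁻¹ - 1 = (1 - r)/r by field_simp, inv_div]
    rw [div_eq_mul_inv, mul_comm]
  have h3 : (1 - r)⁻¹ * r / p ≤ 1 / (σ * p * Real.log p) := by
    rw [key, div_le_div_iff₀ hp0 (by positivity), one_mul]
    have hh : σ * p * Real.log p ≤ (p:ℝ) * ((p:ℝ) ^ σ - 1) := by nlinarith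
    calc ((p:ℝ) ^ σ - 1)⁻¹ * (σ * p * Real.log p)
        ≤ ((p:ℝ) ^ σ - 1)⁻¹ * ((p:ℝ) * ((p:ℝ) ^ σ - 1)) :=
          mul_le_mul_of_nonneg_left hh (inv_nonneg.mpr hps0.le)
      _ = (p:ℝ) := by field_simp
  linarith [h1, h2.le, h3]

open scoped Classical in
lemma sum_frk_le_prod {σ : ℝ} (hσ : 0 < σ) (N : ℕ) :
    ∑ m ∈ Icc 1 N, frk σ m ≤ ∏ p ∈ (N+1).primesBelow, ∑' k, frk σ (p ^ k) := by
  have hnorm : ∀ {p : ℕ}, p.Prime → Summable (fun k : ℕ => ‖frk σ (p ^ k)‖) := by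
    intro p hp
    simpa only [Real.norm_eq_abs] using (summable_frk_pow hσ hp).abs
  have H := EulerProduct.summable_and_hasSum_smoothNumbers_prod_primesBelow_tsum
    (f := frk σ) (frk_one σ) (fun {m n} h => frk_mul σ h) hnorm (N+1)
  refine le_trans ?_ (sum_le_hasSum ((Icc 1 N).subtype (· ∈ (N+1).smoothNumbers))
    (fun m _ => frk_nonneg σ m) H.2)
  rw [Finset.sum_subtype_eq_sum_filter]
  rw [Finset.filter_true_of_mem]
  intro m hm
  rw [Finset.mem_Icc] at hm
  rw [Nat.mem_smoothNumbers']
  intro p hp hpm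
  have := Nat.le_of_dvd (by omega) hpm
  omega

lemma sum_log_inv (N : ℕ) (hN : 2 ≤ N) :
    ∑ n ∈ Icc 2 N, 1 / ((n:ℝ) * Real.log n) ≤ Real.log (Real.log N) + 2 := by
  induction N, hN using Nat.le_induction with
  | base =>
      rw [Finset.Icc_self, Finset.sum_singleton]
      have l2 := Real.log_two_gt_d9
      have l2p : (0:ℝ) < Real.log 2 := by norm_num at l2 ⊢; linarith
      have hinv := Real.log_le_sub_one_of_pos (x := (Real.log 2)⁻¹) (by positivity)
      rw [Real.log_inv] at hinv
      have hi2 : (Real.log 2)⁻¹ ≤ 1 / 0.6931471803 := by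
        rw [inv_eq_one_div]
        apply div_le_div_of_nonneg_left (by norm_num) (by norm_num) (le_of_lt l2)
      have : (2:ℝ) * Real.log 2 ≥ 2 * 0.6931471803 := by nlinarith
      have h1 : 1 / ((2:ℕ):ℝ) / Real.log ((2:ℕ):ℝ) ≤ 1 := by
        push_cast
        rw [div_div]
        rw [div_le_one (by nlinarith)]
        nlinarith
      push_cast
      rw [← div_div] at *
      nlinarith
  | succ n hn ih =>
      rw [Finset.sum_Icc_succ_top (by omega : 2 ≤ n + 1)]
      have hn2 : (2:ℝ) ≤ (n:ℝ) := by exact_mod_cast hn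
      have hnp : (0:ℝ) < (n:ℝ) := by linarith
      have hnp1 : (0:ℝ) < (n:ℝ) + 1 := by linarith
      set u := Real.log n with hu
      set v := Real.log ((n:ℝ)+1) with hv
      have hu0 : 0 < u := Real.log_pos (by linarith)
      have hv0 : 0 < v := Real.log_pos (by linarith)
      have huv : u ≤ v := Real.log_le_log hnp (by linarith)
      -- v - u ≥ 1/(n+1)
      have h1 : 1 / ((n:ℝ)+1) ≤ v - u := by
        have := Real.log_le_sub_one_of_pos (x := (n:ℝ)/((n:ℝ)+1)) (by positivity)
        rw [Real.log_div hnp.ne' hnp1.ne'] at this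
        have heq : (n:ℝ)/((n:ℝ)+1) - 1 = -(1/((n:ℝ)+1)) := by field_simp; ring
        rw [heq] at this
        linarith
      -- log v - log u ≥ (v-u)/v
      have h2 : (v - u)/v ≤ Real.log v - Real.log u := by
        have := Real.log_le_sub_one_of_pos (x := u/v) (by positivity)
        rw [Real.log_div hu0.ne' hv0.ne'] at this
        have heq : u/v - 1 = -((v-u)/v) := by field_simp; ring
        rw [heq] at this
        linarith
      have h3 : 1 / (((n:ℝ)+1) * v) ≤ Real.log v - Real.log u := by
        refine le_trans ?_ h2
        rw [← div_div]
        gcongr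
      have hcast : ((n+1 : ℕ):ℝ) = (n:ℝ) + 1 := by push_cast; ring
      rw [hcast]
      calc ∑ m ∈ Icc 2 n, 1 / ((m:ℝ) * Real.log m) + 1 / (((n:ℝ)+1) * v)
          ≤ (Real.log u + 2) + (Real.log v - Real.log u) := by
            exact add_le_add ih h3
        _ = Real.log v + 2 := by ring

lemma rankin_bound {N : ℕ} (hN : 3 ≤ N) {σ : ℝ} (hσ : 0 < σ) :
    ∑ m ∈ Icc 1 N, (1:ℝ) / rad m ≤
      (N:ℝ) ^ σ * Real.exp ((Real.log (Real.log N) + 2) / σ) := by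
  have hN0 : (0:ℝ) < (N:ℝ) := by exact_mod_cast (by omega : 0 < N)
  have hNσ : (0:ℝ) < (N:ℝ) ^ σ := Real.rpow_pos_of_pos hN0 σ
  -- Step 1
  have step1 : ∑ m ∈ Icc 1 N, (1:ℝ) / rad m ≤ (N:ℝ) ^ σ * ∑ m ∈ Icc 1 N, frk σ m := by
    rw [Finset.mul_sum]
    apply Finset.sum_le_sum
    intro m hm
    rw [Finset.mem_Icc] at hm
    have hm0 : (0:ℝ) < (m:ℝ) := by exact_mod_cast (by omega : 0 < m)
    have hmN : (m:ℝ) ≤ (N:ℝ) := by exact_mod_cast hm.2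
    have hrne : m ≠ 0 := by omega
    have hradp : (0:ℝ) < (rad m : ℝ) := by exact_mod_cast one_le_rad m
    have hkey : (1:ℝ) ≤ (N:ℝ) ^ σ * (m:ℝ) ^ (-σ) := by
      have h1 : (N:ℝ) ^ (-σ) ≤ (m:ℝ) ^ (-σ) :=
        Real.rpow_le_rpow_of_nonpos hm0 hmN (neg_nonpos.mpr hσ.le)
      have h2 : (N:ℝ) ^ σ * (N:ℝ) ^ (-σ) = 1 := by
        rw [← Real.rpow_add hN0]; simp
      calc (1:ℝ) = (N:ℝ) ^ σ * (N:ℝ) ^ (-σ) := h2.symm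
        _ ≤ (N:ℝ) ^ σ * (m:ℝ) ^ (-σ) := mul_le_mul_of_nonneg_left h1 hNσ.le
    unfold frk
    rw [if_neg hrne, ← mul_div_assoc]
    gcongr
  -- Step 3+4
  have tnonneg : ∀ p ∈ (N+1).primesBelow, (0:ℝ) ≤ ∑' k, frk σ (p ^ k) :=
    fun p _ => tsum_nonneg (fun k => frk_nonneg σ _)
  have step3 : ∏ p ∈ (N+1).primesBelow, ∑' k, frk σ (p ^ k)
      ≤ ∏ p ∈ (N+1).primesBelow, Real.exp (1 / (σ * p * Real.log p)) := by
    apply Finset.prod_le_prod tnonneg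
    intro p hp
    have hpp := Nat.prime_of_mem_primesBelow hp
    refine (tsum_frk_le hσ hpp).trans ?_
    have := Real.add_one_le_exp (1 / (σ * p * Real.log p))
    linarith
  have step4 : ∏ p ∈ (N+1).primesBelow, Real.exp (1 / (σ * p * Real.log p))
      = Real.exp (∑ p ∈ (N+1).primesBelow, 1 / (σ * p * Real.log p)) :=
    (Real.exp_sum _ _).symm
  -- Step 5
  have step5 : ∑ p ∈ (N+1).primesBelow, 1 / (σ * p * Real.log p)
      ≤ ∑ n ∈ Icc 2 N, 1 / (σ * n * Real.log n) := by
    apply Finset.sum_le_sum_of_subset_of_nonneg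
    · intro p hp
      have h1 := Nat.prime_of_mem_primesBelow hp
      have h2 := Nat.lt_of_mem_primesBelow hp
      rw [Finset.mem_Icc]
      exact ⟨h1.two_le, by omega⟩
    · intro n hn _
      rw [Finset.mem_Icc] at hn
      have : (0:ℝ) < Real.log n := Real.log_pos (by exact_mod_cast hn.1)
      have : (0:ℝ) < (n:ℝ) := by exact_mod_cast (by omega : 0 < n)
      positivity
  -- Step 6
  have step6 : ∑ n ∈ Icc 2 N, 1 / (σ * n * Real.log n)
      ≤ (Real.log (Real.log N) + 2) / σ := by
    have he : ∀ n ∈ Icc 2 N, 1 / (σ * n * Real.log n) = (1/σ) * (1 / ((n:ℝ) * Real.log n)) := by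
      intro n hn
      rw [div_mul_div_comm, one_mul, mul_assoc]
    rw [Finset.sum_congr rfl he, ← Finset.mul_sum]
    rcases le_or_gt 2 N with h2N | h2N
    · have := sum_log_inv N h2N
      rw [div_eq_mul_one_div, mul_comm]
      exact mul_le_mul_of_nonneg_right this (by positivity) |>.trans
        (le_of_eq (by ring)) |>.trans (le_refl _)
    · omega
  calc ∑ m ∈ Icc 1 N, (1:ℝ) / rad m
      ≤ (N:ℝ) ^ σ * ∑ m ∈ Icc 1 N, frk σ m := step1
    _ ≤ (N:ℝ) ^ σ * Real.exp ((Real.log (Real.log N) + 2) / σ) := by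
        apply mul_le_mul_of_nonneg_left ?_ hNσ.le
        calc ∑ m ∈ Icc 1 N, frk σ m
            ≤ ∏ p ∈ (N+1).primesBelow, ∑' k, frk σ (p ^ k) := sum_frk_le_prod hσ N
          _ ≤ Real.exp (∑ p ∈ (N+1).primesBelow, 1 / (σ * p * Real.log p)) := by
              rw [← step4]; exact step3
          _ ≤ Real.exp ((Real.log (Real.log N) + 2) / σ) :=
              Real.exp_le_exp.mpr (step5.trans step6)

open scoped Classical in
lemma Tcard (N k : ℕ) (hk : 1 ≤ k) :
    (((Icc 1 N).filter (fun n => k ∣ n ∧ n ≠ k ∧ rad (k-1) ∣ n - 1)).card : ℕ)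
      ≤ N / (k * rad (k-1)) := by
  set r := rad (k-1) with hrdef
  have hr : 1 ≤ r := one_le_rad _
  have hrk : r ∣ k - 1 := Nat.prod_primeFactors_dvd _
  have main : ∀ n ∈ (Icc 1 N).filter (fun n => k ∣ n ∧ n ≠ k ∧ r ∣ n - 1),
      ∃ t, 1 ≤ t ∧ t ≤ N / (k * r) ∧ n = k * (r * t + 1) := by
    intro n hn
    simp only [Finset.mem_filter, Finset.mem_Icc] at hn
    obtain ⟨⟨hn1, hnN⟩, hkn, hnk, hrn⟩ := hn
    obtain ⟨m, hm⟩ := hkn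
    have hm1 : 1 ≤ m := by
      rcases Nat.eq_zero_or_pos m with h | h
      · subst h; omega
      · exact h
    have hm2 : m ≠ 1 := fun h => hnk (by rw [hm, h, mul_one])
    have e : m * (k - 1) + m = m * k := by
      have h1 : k - 1 + 1 = k := Nat.succ_pred_eq_of_pos hk
      calc m * (k-1) + m = m * ((k-1)+1) := by ring
        _ = m * k := by rw [h1]
    have e2 : k * m = m * k := mul_comm k m
    have hmk : m ≤ k * m := by nlinarith
    have hdm : r ∣ m - 1 := by
      have h2 : r ∣ k * m - m := by
        rw [show k * m - m = m * (k-1) by omega]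
        exact Dvd.dvd.mul_left hrk m
      have h3 : r ∣ (k*m - 1) - (k*m - m) := Nat.dvd_sub (hm ▸ hrn) h2
      rwa [show (k*m - 1) - (k*m - m) = m - 1 by omega] at h3
    obtain ⟨t, ht⟩ := hdm
    have ht1 : 1 ≤ t := by
      rcases Nat.eq_zero_or_pos t with h | h
      · subst h; omega
      · exact h
    refine ⟨t, ht1, ?_, ?_⟩
    · rw [Nat.le_div_iff_mul_le (by positivity : 0 < k*r)]
      calc t * (k*r) = k * (r * t) := by ring
        _ = k * (m-1) := by rw [← ht]
        _ ≤ k * m := Nat.mul_le_mul_left _ (by omega)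
        _ ≤ N := by rw [← hm]; exact hnN
    · rw [hm]
      congr 1
      omega
  have comp : ∀ n t, 1 ≤ t → n = k * (r * t + 1) → (n / k - 1) / r = t := by
    intro n t ht hn
    rw [hn, Nat.mul_div_cancel_left _ (by omega : 0 < k), Nat.add_sub_cancel,
      Nat.mul_div_cancel_left _ (by omega : 0 < r)]
  refine (Finset.card_le_card_of_injOn (fun n => (n / k - 1) / r) ?_ ?_).trans
    (le_of_eq (by simp [Nat.card_Icc]) : (Icc 1 (N / (k * r))).card ≤ N / (k * r))
  · intro n hn
    obtain ⟨t, ht1, ht2, hte⟩ := main n hn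
    simp only [Finset.coe_Icc, Set.mem_Icc]
    rw [comp n t ht1 hte]
    exact ⟨ht1, ht2⟩
  · intro n1 h1 n2 h2 hf
    obtain ⟨t1, ht1, _, e1⟩ := main n1 h1
    obtain ⟨t2, ht2, _, e2⟩ := main n2 h2
    simp only at hf
    rw [comp n1 t1 ht1 e1, comp n2 t2 ht2 e2] at hf
    rw [e1, e2, hf]

lemma shift_sum (N : ℕ) :
    ∑ k ∈ Icc 1 N, (1:ℝ)/rad (k-1) ≤ 1 + ∑ m ∈ Icc 1 N, (1:ℝ)/rad m := by
  have h : ∑ k ∈ Icc 1 N, (1:ℝ)/rad (k-1) = ∑ j ∈ range N, (1:ℝ)/rad j := by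
    exact Finset.sum_bij' (fun k _ => k - 1) (fun j _ => j + 1)
      (by intro a ha; simp only [Finset.mem_Icc] at ha; simp only [Finset.mem_range]; omega)
      (by intro b hb; simp only [Finset.mem_range] at hb; simp only [Finset.mem_Icc]; omega)
      (by intro a ha; simp only [Finset.mem_Icc] at ha; show a - 1 + 1 = a; omega)
      (by intro b hb; show b + 1 - 1 = b; omega)
      (by intro a ha; rfl)
  rw [h]
  have hsub : range N ⊆ insert 0 (Icc 1 N) := by
    intro j hj
    simp only [Finset.mem_range] at hj
    simp only [Finset.mem_insert, Finset.mem_Icc]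
    omega
  refine (Finset.sum_le_sum_of_subset_of_nonneg hsub ?_).trans ?_
  · intro j _ _
    positivity
  · rw [Finset.sum_insert (by simp)]
    simp [rad]

open scoped Classical in
lemma cover (x : ℝ) :
    (Finset.Icc 1 ⌊x⌋₊).filter
        (fun n => 1 < n ∧ ¬ n.Prime ∧ rad n.totient ∣ n - 1 ∧
          ∃ p : ℕ, p.Prime ∧ p ∣ n ∧ (L x) ^ 2 < (p : ℝ)) ⊆
      ((Icc 1 ⌊x⌋₊).filter (fun k : ℕ => (L x)^2 < (k:ℝ))).biUnion
        (fun (k : ℕ) => (Icc 1 ⌊x⌋₊).filter (fun n => k ∣ n ∧ n ≠ k ∧ rad (k-1) ∣ n - 1)) := by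
  intro n hn
  simp only [Finset.mem_filter, Finset.mem_Icc] at hn
  obtain ⟨⟨hn1, hnN⟩, hlt, hnp, hradn, p, hp, hpn, hpL⟩ := hn
  rw [Finset.mem_biUnion]
  have hpn' : p ≤ n := Nat.le_of_dvd (by omega) hpn
  refine ⟨p, ?_, ?_⟩
  · simp only [Finset.mem_filter, Finset.mem_Icc]
    exact ⟨⟨hp.pos, hpn'.trans hnN⟩, hpL⟩
  · simp only [Finset.mem_filter, Finset.mem_Icc]
    refine ⟨⟨by omega, hnN⟩, hpn, ?_, ?_⟩
    · rintro rfl; exact hnp hp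
    · -- rad (p-1) ∣ n - 1
      have htot_ne : n.totient ≠ 0 := (Nat.totient_pos.mpr (by omega)).ne'
      have hsq : ¬ (p * p ∣ n) := by
        intro hsq
        have h1 : Nat.totient (p ^ 2) ∣ n.totient :=
          Nat.totient_dvd_of_dvd (by rwa [pow_two])
        have h2 : p ∣ Nat.totient (p ^ 2) := by
          rw [Nat.totient_prime_pow hp (by norm_num : 0 < 2)]
          simp
        have h3 : p ∣ n.totient := h2.trans h1
        have h4 : p ∣ rad n.totient :=
          Finset.dvd_prod_of_mem _ (Nat.mem_primeFactors.mpr ⟨hp, h3, htot_ne⟩)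
        have h5 : p ∣ n - 1 := h4.trans hradn
        have h6 : p ∣ n - (n - 1) := Nat.dvd_sub hpn h5
        rw [show n - (n - 1) = 1 by omega] at h6
        exact hp.one_lt.ne' (Nat.dvd_one.mp h6)
      obtain ⟨m, hm⟩ := hpn
      have hpm : ¬ p ∣ m := by
        intro hdvd
        exact hsq (hm ▸ mul_dvd_mul_left p hdvd)
      have hcop : Nat.Coprime p m := (Nat.Prime.coprime_iff_not_dvd hp).mpr hpm
      have hptot : (p - 1) ∣ n.totient := by
        rw [hm, Nat.totient_mul hcop, ← Nat.totient_prime hp]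
        exact dvd_mul_right _ _
      exact (rad_dvd_rad hptot htot_ne).trans hradn

set_option maxHeartbeats 1000000 in
open scoped Classical in
lemma main_bound {x : ℝ} (hx3 : (3:ℝ) ≤ x)
    (hc1 : 1 ≤ Real.log (Real.log (Real.log x)))
    (hb1 : 1 ≤ Real.log (Real.log x))
    (hab : 40 * (Real.log (Real.log x))^3 ≤ Real.log x) :
    (((Finset.Icc 1 ⌊x⌋₊).filter
        (fun n => 1 < n ∧ ¬ n.Prime ∧ rad n.totient ∣ n - 1 ∧
          ∃ p : ℕ, p.Prime ∧ p ∣ n ∧ (L x) ^ 2 < (p : ℝ))).card : ℝ)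
        ≤ x / L x := by
  have hx0 : (0:ℝ) < x := by linarith
  set N := ⌊x⌋₊ with hNdef
  set a := Real.log x with ha
  set b := Real.log a with hb
  set c := Real.log b with hc
  have hb0 : (0:ℝ) < b := by linarith
  have hc0 : (0:ℝ) < c := by linarith
  have ha1 : 1 ≤ a := by
    rw [ha, ← Real.log_exp 1]
    apply Real.log_le_log (Real.exp_pos 1)
    have := Real.exp_one_lt_d9
    linarith
  have ha0 : (0:ℝ) < a := by linarith
  have hL : L x = Real.exp (a * (c / b)) := rfl
  have hLpos : 0 < L x := Real.exp_pos _
  set σ := c / (2*b) with hσdef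
  have hσ : 0 < σ := by positivity
  have hN3 : 3 ≤ N := Nat.le_floor (by exact_mod_cast hx3)
  have hN0 : (0:ℝ) < (N:ℝ) := by exact_mod_cast (by omega : 0 < N)
  have hNx : (N:ℝ) ≤ x := Nat.floor_le hx0.le
  have hacb : 40 ≤ a * c / b := by
    have h1 : 40 * b^3 ≤ a * c := by nlinarith
    have h2 : 40 * b^3 / (2*b) ≤ a * c / (2*b) := by gcongr
    have h3 : 40 * b^3 / (2*b) = 20 * b^2 := by
      field_simp
      ring
    have h4 : a * c / b = 2 * (a * c / (2*b)) := by field_simp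
    nlinarith
  have hL2 : 2 ≤ L x := by
    rw [hL]
    have he : a * (c/b) = a * c / b := by ring
    rw [he]
    have := Real.add_one_le_exp (a * c / b)
    linarith
  -- Rankin bound on the radical sum
  have hsum_rad : ∑ m ∈ Icc 1 N, (1:ℝ) / rad m ≤ L x / 2 := by
    have hrank := rankin_bound hN3 hσ
    have hlogN0 : (0:ℝ) < Real.log N := by
      apply Real.log_pos
      have : (3:ℝ) ≤ (N:ℝ) := by exact_mod_cast hN3
      linarith
    have hlogNa : Real.log N ≤ a := Real.log_le_log hN0 hNx
    have hllN : Real.log (Real.log N) ≤ b := Real.log_le_log hlogN0 hlogNa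
    have t1 : (N:ℝ) ^ σ ≤ Real.exp (a * σ) := by
      calc (N:ℝ) ^ σ ≤ x ^ σ := Real.rpow_le_rpow hN0.le hNx hσ.le
        _ = Real.exp (a * σ) := Real.rpow_def_of_pos hx0 σ
    have t2 : Real.exp ((Real.log (Real.log N) + 2)/σ) ≤ Real.exp ((b + 2)/σ) := by
      apply Real.exp_le_exp.mpr
      gcongr
    have harg : a * σ + (b + 2)/σ ≤ a * c / b - Real.log 2 := by
      have e1 : a * σ = a * c / (2*b) := by rw [hσdef]; ring
      have e2 : (b+2)/σ = (b+2) * (2*b) / c := by rw [hσdef, div_div_eq_mul_div]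
      have h4 : (b+2) * (2*b) / c ≤ (b+2) * (2*b) := div_le_self (by positivity) hc1
      have h5 : (b+2) * (2*b) + 1 ≤ a * c / (2*b) := by
        have hac : 40 * b^3 ≤ a * c := by nlinarith
        have h2 : 40 * b^3 / (2*b) ≤ a * c / (2*b) := by gcongr
        have h3 : 40 * b^3 / (2*b) = 20 * b^2 := by field_simp; ring
        nlinarith
      have h6 : a * c / b = 2 * (a * c / (2*b)) := by field_simp
      have hlog2 : Real.log 2 ≤ 1 := by
        have := Real.log_two_lt_d9
        linarith
      rw [e1, e2]
      linarith
    calc ∑ m ∈ Icc 1 N, (1:ℝ) / rad m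
        ≤ (N:ℝ) ^ σ * Real.exp ((Real.log (Real.log N) + 2)/σ) := hrank
      _ ≤ Real.exp (a * σ) * Real.exp ((b + 2)/σ) := by
          apply mul_le_mul t1 t2 (Real.exp_pos _).le (Real.exp_pos _).le
      _ = Real.exp (a * σ + (b + 2)/σ) := (Real.exp_add _ _).symm
      _ ≤ Real.exp (a * c / b - Real.log 2) := Real.exp_le_exp.mpr harg
      _ = L x / 2 := by
          rw [Real.exp_sub, Real.exp_log (by norm_num : (0:ℝ) < 2), hL]
          congr 2
          ring
  -- the counting chain
  set K := (Icc 1 N).filter (fun k : ℕ => (L x)^2 < (k:ℝ)) with hK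
  set T := fun (k : ℕ) => (Icc 1 N).filter
    (fun n => k ∣ n ∧ n ≠ k ∧ rad (k-1) ∣ n - 1) with hT
  have hcard1 : (((Finset.Icc 1 N).filter
      (fun n => 1 < n ∧ ¬ n.Prime ∧ rad n.totient ∣ n - 1 ∧
        ∃ p : ℕ, p.Prime ∧ p ∣ n ∧ (L x) ^ 2 < (p : ℝ))).card : ℝ)
      ≤ ∑ k ∈ K, ((T k).card : ℝ) := by
    have h1 := Finset.card_le_card (cover x)
    have h2 := Finset.card_biUnion_le (s := K) (t := T)
    have := h1.trans h2
    exact_mod_cast this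
  refine hcard1.trans ?_
  have hterm : ∀ k ∈ K, ((T k).card : ℝ) ≤ (x / (L x)^2) * (1 / rad (k-1)) := by
    intro k hk
    rw [hK, Finset.mem_filter, Finset.mem_Icc] at hk
    obtain ⟨⟨hk1, hkN⟩, hkL⟩ := hk
    have hrpos : (0:ℝ) < (rad (k-1) : ℝ) := by exact_mod_cast one_le_rad (k-1)
    have hkpos : (0:ℝ) < (k:ℝ) := by exact_mod_cast hk1
    have hLsq : (0:ℝ) < (L x)^2 := by positivity
    have h1 : ((T k).card : ℝ) ≤ ((N / (k * rad (k-1)) : ℕ) : ℝ) := by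
      exact_mod_cast Tcard N k hk1
    have h2 : ((N / (k * rad (k-1)) : ℕ) : ℝ) ≤ (N:ℝ) / ((k:ℝ) * (rad (k-1):ℝ)) := by
      have := Nat.cast_div_le (α := ℝ) (m := N) (n := k * rad (k-1))
      push_cast at this ⊢
      exact this
    have h3 : (N:ℝ) / ((k:ℝ) * (rad (k-1):ℝ)) ≤ x / ((L x)^2 * (rad (k-1):ℝ)) := by
      calc (N:ℝ) / ((k:ℝ) * (rad (k-1):ℝ)) ≤ x / ((k:ℝ) * (rad (k-1):ℝ)) := by gcongr
        _ ≤ x / ((L x)^2 * (rad (k-1):ℝ)) := by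
            gcongr
    have h4 : x / ((L x)^2 * (rad (k-1):ℝ)) = (x / (L x)^2) * (1 / rad (k-1)) := by
      rw [div_mul_div_comm, mul_one]
    linarith
  refine (Finset.sum_le_sum hterm).trans ?_
  rw [← Finset.mul_sum]
  have hsub : ∑ k ∈ K, (1:ℝ) / rad (k-1) ≤ ∑ k ∈ Icc 1 N, (1:ℝ) / rad (k-1) := by
    apply Finset.sum_le_sum_of_subset_of_nonneg (Finset.filter_subset _ _)
    intro k _ _
    positivity
  have hfin : ∑ k ∈ K, (1:ℝ) / rad (k-1) ≤ L x := by
    refine (hsub.trans (shift_sum N)).trans ?_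
    linarith
  calc (x / (L x)^2) * ∑ k ∈ K, (1:ℝ) / rad (k-1)
      ≤ (x / (L x)^2) * L x := by
        apply mul_le_mul_of_nonneg_left hfin (by positivity)
    _ = x / L x := by
        rw [pow_two]
        field_simp

set_option maxHeartbeats 1000000 in
open scoped Classical in
open Filter in
theorem K_large_prime_factor_bound :
    ∃ C : ℝ, ∃ x₀ : ℝ, ∀ x : ℝ, x₀ ≤ x →
      ((((Finset.Icc 1 ⌊x⌋₊).filter
        (fun n => 1 < n ∧ ¬ n.Prime ∧ rad n.totient ∣ n - 1 ∧
          ∃ p : ℕ, p.Prime ∧ p ∣ n ∧ (L x) ^ 2 < (p : ℝ))).card : ℝ))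
        ≤ C * x / L x := by
  have tlog : Tendsto Real.log atTop atTop := Real.tendsto_log_atTop
  have tll : Tendsto (fun x : ℝ => Real.log (Real.log x)) atTop atTop := tlog.comp tlog
  have tlll : Tendsto (fun x : ℝ => Real.log (Real.log (Real.log x))) atTop atTop :=
    tlog.comp tll
  have ev1 : ∀ᶠ (x:ℝ) in atTop, (3:ℝ) ≤ x := eventually_ge_atTop 3
  have ev2 : ∀ᶠ (x:ℝ) in atTop, 1 ≤ Real.log (Real.log (Real.log x)) :=
    tlll.eventually_ge_atTop 1
  have ev3 : ∀ᶠ (x:ℝ) in atTop, 1 ≤ Real.log (Real.log x) := tll.eventually_ge_atTop 1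
  have ev4' : ∀ᶠ (y:ℝ) in atTop, 40 * (Real.log y)^3 ≤ y := by
    have h := (Real.isLittleO_pow_log_id_atTop (n := 3)).def (by norm_num : (0:ℝ) < 1/40)
    filter_upwards [h, eventually_ge_atTop (1:ℝ)] with y hy hy1
    simp only [Real.norm_eq_abs, id_eq] at hy
    have h1 : (Real.log y)^3 ≤ |(Real.log y)^3| := le_abs_self _
    have h2 : |y| = y := abs_of_nonneg (by linarith)
    rw [h2] at hy
    linarith
  have ev4 : ∀ᶠ (x:ℝ) in atTop, 40 * (Real.log (Real.log x))^3 ≤ Real.log x :=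
    tlog.eventually ev4'
  obtain ⟨x₀, hx₀⟩ := eventually_atTop.mp ((ev1.and (ev2.and (ev3.and ev4))))
  refine ⟨1, x₀, fun x hx => ?_⟩
  obtain ⟨hx3, hc1, hb1, hab⟩ := hx₀ x hx
  rw [one_mul]
  exact main_bound hx3 hc1 hb1 hab
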